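/- Each of the groups Z_2 × Z_4, (Z_2)^3, and D_4 admits a generating vector of type (1 | 2, 2). -/

import Mathlib

open scoped commutatorElement

open Multiplicative DihedralGroup

lemma gv_zmod_mem (x : Multiplicative (ZMod 2 × ZMod 4)) :
    x ∈ Subgroup.closure {ofAdd ((1 : ZMod 2), (2 : ZMod 4)),
      ofAdd ((1 : ZMod 2), (2 : ZMod 4)),
      ofAdd ((1 : ZMod 2), (0 : ZMod 4)), ofAdd ((0 : ZMod 2), (1 : ZMod 4))} := by
  have h1 : (ofAdd ((1 : ZMod 2), (0 : ZMod 4))) ∈ Subgroup.closure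
      {ofAdd ((1 : ZMod 2), (2 : ZMod 4)), ofAdd ((1 : ZMod 2), (2 : ZMod 4)),
       ofAdd ((1 : ZMod 2), (0 : ZMod 4)), ofAdd ((0 : ZMod 2), (1 : ZMod 4))} :=
    Subgroup.subset_closure (by simp)
  have h2 : (ofAdd ((0 : ZMod 2), (1 : ZMod 4))) ∈ Subgroup.closure
      {ofAdd ((1 : ZMod 2), (2 : ZMod 4)), ofAdd ((1 : ZMod 2), (2 : ZMod 4)),
       ofAdd ((1 : ZMod 2), (0 : ZMod 4)), ofAdd ((0 : ZMod 2), (1 : ZMod 4))} :=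
    Subgroup.subset_closure (by simp)
  have hx : x = (ofAdd ((1 : ZMod 2), (0 : ZMod 4))) ^ (x.toAdd.1.val) *
      (ofAdd ((0 : ZMod 2), (1 : ZMod 4))) ^ (x.toAdd.2.val) := by
    apply Multiplicative.toAdd.injective
    simp only [toAdd_mul, toAdd_pow, toAdd_ofAdd, smul_eq_mul, Prod.smul_mk, Prod.mk_add_mk,
      nsmul_eq_mul, mul_one, mul_zero, add_zero, zero_add]
    simp [ZMod.natCast_val, ZMod.cast_id]
  rw [hx]
  exact mul_mem (pow_mem h1 _) (pow_mem h2 _)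


lemma gv_zmod3_mem (x : Multiplicative (ZMod 2 × ZMod 2 × ZMod 2)) :
    x ∈ Subgroup.closure {ofAdd ((1 : ZMod 2), (0 : ZMod 2), (0 : ZMod 2)),
      ofAdd ((1 : ZMod 2), (0 : ZMod 2), (0 : ZMod 2)),
      ofAdd ((0 : ZMod 2), (1 : ZMod 2), (0 : ZMod 2)),
      ofAdd ((0 : ZMod 2), (0 : ZMod 2), (1 : ZMod 2))} := by
  set S : Set (Multiplicative (ZMod 2 × ZMod 2 × ZMod 2)) :=
    {ofAdd ((1 : ZMod 2), (0 : ZMod 2), (0 : ZMod 2)),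
     ofAdd ((1 : ZMod 2), (0 : ZMod 2), (0 : ZMod 2)),
     ofAdd ((0 : ZMod 2), (1 : ZMod 2), (0 : ZMod 2)),
     ofAdd ((0 : ZMod 2), (0 : ZMod 2), (1 : ZMod 2))} with hS
  have h1 : (ofAdd ((1 : ZMod 2), (0 : ZMod 2), (0 : ZMod 2))) ∈ Subgroup.closure S :=
    Subgroup.subset_closure (by simp [hS])
  have h2 : (ofAdd ((0 : ZMod 2), (1 : ZMod 2), (0 : ZMod 2))) ∈ Subgroup.closure S :=
    Subgroup.subset_closure (by simp [hS])
  have h3 : (ofAdd ((0 : ZMod 2), (0 : ZMod 2), (1 : ZMod 2))) ∈ Subgroup.closure S :=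
    Subgroup.subset_closure (by simp [hS])
  have hx : x = (ofAdd ((1 : ZMod 2), (0 : ZMod 2), (0 : ZMod 2))) ^ (x.toAdd.1.val) *
      (ofAdd ((0 : ZMod 2), (1 : ZMod 2), (0 : ZMod 2))) ^ (x.toAdd.2.1.val) *
      (ofAdd ((0 : ZMod 2), (0 : ZMod 2), (1 : ZMod 2))) ^ (x.toAdd.2.2.val) := by
    apply Multiplicative.toAdd.injective
    simp only [toAdd_mul, toAdd_pow, toAdd_ofAdd, Prod.smul_mk, Prod.mk_add_mk,
      nsmul_eq_mul, mul_one, mul_zero, add_zero, zero_add, smul_eq_mul]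
    simp [ZMod.natCast_val, ZMod.cast_id]
  rw [hx]
  exact mul_mem (mul_mem (pow_mem h1 _) (pow_mem h2 _)) (pow_mem h3 _)

lemma gv_dihedral_mem (x : DihedralGroup 4) :
    x ∈ Subgroup.closure {DihedralGroup.sr 0, DihedralGroup.sr 2,
      DihedralGroup.r 1, DihedralGroup.sr 0} := by
  set S : Set (DihedralGroup 4) :=
    {DihedralGroup.sr 0, DihedralGroup.sr 2, DihedralGroup.r 1, DihedralGroup.sr 0} with hS
  have hr : (DihedralGroup.r (1 : ZMod 4)) ∈ Subgroup.closure S :=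
    Subgroup.subset_closure (by simp [hS])
  have hs : (DihedralGroup.sr (0 : ZMod 4)) ∈ Subgroup.closure S :=
    Subgroup.subset_closure (by simp [hS])
  cases x with
  | r i =>
    have : DihedralGroup.r i = (DihedralGroup.r (1 : ZMod 4)) ^ i.val := by
      rw [DihedralGroup.r_one_pow, ZMod.natCast_val, ZMod.cast_id]
    rw [this]; exact pow_mem hr _
  | sr i =>
    have : DihedralGroup.sr i = DihedralGroup.sr 0 * (DihedralGroup.r (1 : ZMod 4)) ^ i.val := by
      rw [DihedralGroup.r_one_pow, DihedralGroup.sr_mul_r, ZMod.natCast_val, ZMod.cast_id,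
        zero_add]
    rw [this]; exact mul_mem hs (pow_mem hr _)

theorem generating_vector_type_1_2_2 :
    (∃ l₁ l₂ h₁ h₂ : Multiplicative (ZMod 2 × ZMod 4),
      orderOf l₁ = 2 ∧ orderOf l₂ = 2 ∧ l₁ * l₂ * ⁅h₁, h₂⁆ = 1 ∧
      Subgroup.closure {l₁, l₂, h₁, h₂} = ⊤) ∧
    (∃ l₁ l₂ h₁ h₂ : Multiplicative (ZMod 2 × ZMod 2 × ZMod 2),
      orderOf l₁ = 2 ∧ orderOf l₂ = 2 ∧ l₁ * l₂ * ⁅h₁, h₂⁆ = 1 ∧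
      Subgroup.closure {l₁, l₂, h₁, h₂} = ⊤) ∧
    (∃ l₁ l₂ h₁ h₂ : DihedralGroup 4,
      orderOf l₁ = 2 ∧ orderOf l₂ = 2 ∧ l₁ * l₂ * ⁅h₁, h₂⁆ = 1 ∧
      Subgroup.closure {l₁, l₂, h₁, h₂} = ⊤) := by
  refine ⟨?_, ?_, ?_⟩
  · refine ⟨ofAdd ((1 : ZMod 2), (2 : ZMod 4)), ofAdd ((1 : ZMod 2), (2 : ZMod 4)),
      ofAdd ((1 : ZMod 2), (0 : ZMod 4)), ofAdd ((0 : ZMod 2), (1 : ZMod 4)), ?_, ?_, ?_, ?_⟩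
    · apply orderOf_eq_prime <;> decide
    · apply orderOf_eq_prime <;> decide
    · decide
    · rw [eq_top_iff]; exact fun x _ => gv_zmod_mem x
  · refine ⟨ofAdd ((1 : ZMod 2), (0 : ZMod 2), (0 : ZMod 2)),
      ofAdd ((1 : ZMod 2), (0 : ZMod 2), (0 : ZMod 2)),
      ofAdd ((0 : ZMod 2), (1 : ZMod 2), (0 : ZMod 2)),
      ofAdd ((0 : ZMod 2), (0 : ZMod 2), (1 : ZMod 2)), ?_, ?_, ?_, ?_⟩
    · apply orderOf_eq_prime <;> decide
    · apply orderOf_eq_prime <;> decide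
    · decide
    · rw [eq_top_iff]; exact fun x _ => gv_zmod3_mem x
  · refine ⟨DihedralGroup.sr 0, DihedralGroup.sr 2, DihedralGroup.r 1, DihedralGroup.sr 0,
      DihedralGroup.orderOf_sr 0, DihedralGroup.orderOf_sr 2, by decide, ?_⟩
    rw [eq_top_iff]; exact fun x _ => gv_dihedral_mem x
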